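/- Let 0 < α < π/2 and 0 < r < π/2 with π²/4 − 2 cos α · r(π − r) ≥ 0. Then the function b ↦ f(α, r, b) is differentiable with derivative ∂f/∂b = −2 sin(2α − 4b)·sin²(2r), and f(α, r, ·) is strictly decreasing on the interval [α/2 − π/4, α/2]. -/

import Mathlib

open Real

/-- The function whose zeros parametrize the boundary contours associated to
isosceles triunduloids. -/
noncomputable def isoF (α r b : ℝ) : ℝ :=
  Real.sin (α - 2 * b) ^ 2 * Real.sin (2 * r) ^ 2 + Real.cos (2 * r) ^ 2 -
    Real.sin (Real.sqrt (π ^ 2 / 4 - 2 * Real.cos α * (r * (π - r)))) ^ 2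

lemma isoF_deriv (α r b : ℝ) :
    HasDerivAt (fun b => isoF α r b)
      (-2 * Real.sin (2 * α - 4 * b) * Real.sin (2 * r) ^ 2) b := by
  have h1 : HasDerivAt (fun b : ℝ => α - 2 * b) (-2) b := by
    simpa using ((hasDerivAt_id b).const_mul 2).const_sub α
  have h2 : HasDerivAt (fun b : ℝ => Real.sin (α - 2 * b))
      (Real.cos (α - 2 * b) * (-2)) b := (Real.hasDerivAt_sin _).comp b h1
  have h3 : HasDerivAt (fun b : ℝ => Real.sin (α - 2 * b) ^ 2)
      (2 * Real.sin (α - 2 * b) ^ 1 * (Real.cos (α - 2 * b) * (-2))) b := by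
    simpa using h2.fun_pow 2
  have h4 := (h3.mul_const (Real.sin (2 * r) ^ 2)).add_const
      (Real.cos (2 * r) ^ 2 -
        Real.sin (Real.sqrt (π ^ 2 / 4 - 2 * Real.cos α * (r * (π - r)))) ^ 2)
  have heq : (fun b : ℝ =>
      Real.sin (α - 2 * b) ^ 2 * Real.sin (2 * r) ^ 2 +
        (Real.cos (2 * r) ^ 2 -
          Real.sin (Real.sqrt (π ^ 2 / 4 - 2 * Real.cos α * (r * (π - r)))) ^ 2)) =
      fun b => isoF α r b := by
    funext x; unfold isoF; ring
  rw [heq] at h4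
  refine h4.congr_deriv ?_
  have : Real.sin (2 * α - 4 * b) = Real.sin (2 * (α - 2 * b)) := by ring_nf
  rw [this, Real.sin_two_mul (α - 2 * b)]
  ring

theorem stmt_11 (α r : ℝ) (hα : 0 < α ∧ α < π / 2) (hr : 0 < r ∧ r < π / 2)
    (hpos : 0 ≤ π ^ 2 / 4 - 2 * Real.cos α * (r * (π - r))) :
    (∀ b : ℝ,
      HasDerivAt (fun b => isoF α r b)
        (-2 * Real.sin (2 * α - 4 * b) * Real.sin (2 * r) ^ 2) b) ∧
    StrictAntiOn (fun b => isoF α r b) (Set.Icc (α / 2 - π / 4) (α / 2)) := by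
  refine ⟨fun b => isoF_deriv α r b, ?_⟩
  have hπ := Real.pi_pos
  apply strictAntiOn_of_deriv_neg (convex_Icc _ _)
  · exact Continuous.continuousOn (by
      have : ∀ b, HasDerivAt (fun b => isoF α r b) _ b := fun b => isoF_deriv α r b
      exact continuous_iff_continuousAt.mpr fun b => (isoF_deriv α r b).continuousAt)
  · intro b hb
    rw [interior_Icc, Set.mem_Ioo] at hb
    rw [(isoF_deriv α r b).deriv]
    have hs2r : 0 < Real.sin (2 * r) :=
      Real.sin_pos_of_pos_of_lt_pi (by linarith [hr.1]) (by linarith [hr.2])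
    have hs : 0 < Real.sin (2 * α - 4 * b) := by
      apply Real.sin_pos_of_pos_of_lt_pi <;> [linarith [hb.2]; linarith [hb.1]]
    have := mul_pos hs (pow_pos hs2r 2); linarith
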